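/- For every odd integer n > 3, there exists a subspace U of F_2^n of codimension 2 such that the union of the cyclic shifts of U equals F_2^n. (Explicitly, the span of {11...1, 1010...0, 000110...0, 0000110...0, ..., 0...011} is such a subspace.) -/

import Mathlib

open Polynomial Module

/-- The cyclic shift operator on `Fin n → F`. -/
def cycShift (F : Type*) (n : ℕ) : (Fin n → F) → (Fin n → F) :=
  fun x i => x ⟨(i.1 + 1) % n, Nat.mod_lt _ (lt_of_le_of_lt (Nat.zero_le _) i.2)⟩

/-- A subspace `U ≤ F^n` is cyclically covering if the union of its cyclic shifts is `F^n`. -/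
def IsCycCovering (F : Type*) [Field F] (n : ℕ) (U : Submodule F (Fin n → F)) : Prop :=
  ∀ x : Fin n → F, ∃ r : ℕ, (cycShift F n)^[r] x ∈ U

/-- `hq F n` : the maximum codimension of a cyclically covering subspace of `F^n`. -/
noncomputable def hq (F : Type*) [Field F] [Fintype F] (n : ℕ) : ℕ :=
  sSup {k | ∃ U : Submodule F (Fin n → F), IsCycCovering F n U ∧
    Module.finrank F (Fin n → F) - Module.finrank F U = k}

open Fin.NatCast Fin.CommRing

/-- The linear map whose kernel is our cyclically covering subspace. -/
def covMap (n : ℕ) [NeZero n] : (Fin n → ZMod 2) →ₗ[ZMod 2] (ZMod 2 × ZMod 2) where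
  toFun x := (x 0 + x 2, x 1 + ∑ i, x i)
  map_add' x y := by
    simp only [Pi.add_apply, Finset.sum_add_distrib, Prod.mk_add_mk, Prod.mk.injEq]
    constructor <;> ring
  map_smul' c x := by
    simp only [Pi.smul_apply, smul_eq_mul, RingHom.id_apply, Prod.smul_mk,
      ← Finset.mul_sum, Prod.mk.injEq]
    constructor <;> ring

lemma cycShift_apply_fin {F : Type*} {n : ℕ} [NeZero n] (hn : 1 < n) (x : Fin n → F)
    (i : Fin n) : cycShift F n x i = x (i + 1) := by
  show x _ = x _
  apply congrArg
  rw [Fin.ext_iff, Fin.val_add, Fin.val_one' n, Nat.one_mod_eq_one.mpr (by omega)]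

lemma cycShift_iterate {F : Type*} {n : ℕ} [NeZero n] (hn : 1 < n) (x : Fin n → F) (r : ℕ)
    (i : Fin n) : (cycShift F n)^[r] x i = x (i + (r : Fin n)) := by
  induction r generalizing i with
  | zero => simp
  | succ r ih =>
    rw [Function.iterate_succ_apply', cycShift_apply_fin hn, ih]
    congr 1
    push_cast
    ring

/-- The key combinatorial lemma: there is a position `j` with `x j = ∑ x` and
`x (j-1) = x (j+1)`. -/
lemma key_lemma {n : ℕ} [NeZero n] (hn : 3 < n) (hodd : Odd n) (x : Fin n → ZMod 2) :
    ∃ j : Fin n, x j = ∑ i, x i ∧ x (j - 1) = x (j + 1) := by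
  by_contra hc
  push_neg at hc
  set s := ∑ i, x i with hs
  have hone : (1 : Fin n) ≠ 0 := by
    intro h
    have h' := congrArg Fin.val h
    rw [Fin.val_one' n, Nat.one_mod_eq_one.mpr (by omega), Fin.val_zero] at h'
    exact one_ne_zero h'
  set A : Finset (Fin n) := Finset.univ.filter (fun j => x j = s) with hA
  have hmemA : ∀ j : Fin n, j ∈ A ↔ x j = s := by intro j; simp [hA]
  have htri : ∀ u v w : ZMod 2, u ≠ v → v ≠ w → u = w := by decide
  -- pairing up the elements of A by a fixed-point-free involution
  have hcard : ∑ _j ∈ A, (1 : ZMod 2) = 0 := by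
    refine Finset.sum_involution
      (fun j _ => if x (j + 1) = s then j + 1 else j - 1) (fun a _ => by decide)
      (fun a ha _ => ?_) (fun a ha => ?_) (fun a ha => ?_)
    · by_cases h : x (a + 1) = s
      · rw [if_pos h]
        intro hh
        exact hone (by rwa [add_eq_left] at hh)
      · rw [if_neg h]
        intro hh
        exact hone (by rwa [sub_eq_self] at hh)
    · rw [hmemA] at ha ⊢
      by_cases h : x (a + 1) = s
      · rwa [if_pos h]
      · rw [if_neg h]
        exact htri _ _ _ (hc a ha) h
    · rw [hmemA] at ha
      by_cases h : x (a + 1) = s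
      · have h2 : x (a + 1 + 1) ≠ s := by
          intro hh
          apply hc (a + 1) h
          rw [add_sub_cancel_right, ha, hh]
        simp only [if_pos h, if_neg h2]
        ring
      · have hm : x (a - 1) = s := htri _ _ _ (hc a ha) h
        have h2 : x (a - 1 + 1) = s := by rwa [sub_add_cancel]
        simp only [if_neg h, if_pos h2]
        ring
  -- counting: the sum of x equals (s+1) + |A| mod 2
  have hpt : ∀ a b : ZMod 2, a = b + 1 + (if a = b then (1 : ZMod 2) else 0) := by decide
  have hn2 : ((n : ZMod 2)) = 1 := by
    rw [← ZMod.natCast_mod n 2, Nat.odd_iff.mp hodd, Nat.cast_one]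
  have hsum : s = (s + 1) + ∑ _j ∈ A, (1 : ZMod 2) := by
    calc s = ∑ j, x j := hs
    _ = ∑ j : Fin n, ((s + 1) + if x j = s then (1 : ZMod 2) else 0) := by
        refine Finset.sum_congr rfl fun j _ => ?_
        exact hpt (x j) s
    _ = (n : ZMod 2) * (s + 1) + ∑ j : Fin n, (if x j = s then (1 : ZMod 2) else 0) := by
        rw [Finset.sum_add_distrib, Finset.sum_const, Finset.card_univ, Fintype.card_fin,
          nsmul_eq_mul]
    _ = (s + 1) + ∑ _j ∈ A, (1 : ZMod 2) := by
        rw [hn2, one_mul, hA, Finset.sum_filter]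
  rw [hcard, add_zero] at hsum
  have h10 : (1 : ZMod 2) = 0 := by linear_combination -hsum
  exact one_ne_zero h10

lemma zmod2_add_self (a : ZMod 2) : a + a = 0 := by revert a; decide

theorem stmt_0 (n : ℕ) (hn : 3 < n) (hodd : Odd n) :
    ∃ U : Submodule (ZMod 2) (Fin n → ZMod 2), IsCycCovering (ZMod 2) n U ∧
      Module.finrank (ZMod 2) (Fin n → ZMod 2) - Module.finrank (ZMod 2) U = 2 := by
  haveI : NeZero n := ⟨by omega⟩
  refine ⟨LinearMap.ker (covMap n), ?_, ?_⟩
  · -- cyclically covering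
    intro x
    obtain ⟨j, hj1, hj2⟩ := key_lemma hn hodd x
    refine ⟨(j - 1).val, ?_⟩
    rw [LinearMap.mem_ker]
    have hy : ∀ i : Fin n, (cycShift (ZMod 2) n)^[(j - 1).val] x i = x (i + (j - 1)) := by
      intro i
      rw [cycShift_iterate (by omega) x _ i, Fin.cast_val_eq_self]
    have hsum : (∑ i, (cycShift (ZMod 2) n)^[(j-1).val] x i) = ∑ i, x i := by
      rw [Finset.sum_congr rfl fun i _ => hy i]
      exact Equiv.sum_comp (Equiv.addRight (j - 1)) x
    show (_, _) = (0, 0)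
    rw [Prod.mk.injEq]
    constructor
    · rw [hy 0, hy 2, zero_add]
      have h2 : (2 : Fin n) + (j - 1) = j + 1 := by
        rw [← one_add_one_eq_two]; ring
      rw [h2, hj2, zmod2_add_self]
    · rw [hy 1, hsum]
      have h1 : (1 : Fin n) + (j - 1) = j := by ring
      rw [h1, ← hj1, zmod2_add_self]
  · -- codimension 2
    have hsurj : Function.Surjective (covMap n) := by
      have hv3 : ((3 : Fin n)).val = 3 := by
        simp [OfNat.ofNat, Fin.ofNat, Nat.mod_eq_of_lt (show 3 < n from hn)]
      have hv2 : ((2 : Fin n)).val = 2 := by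
        simp [OfNat.ofNat, Fin.ofNat, Nat.mod_eq_of_lt (show 2 < n by omega)]
      have hv1 : ((1 : Fin n)).val = 1 := by
        rw [Fin.val_one' n, Nat.one_mod_eq_one.mpr (by omega)]
      have hne0 : (3 : Fin n) ≠ 0 := Fin.ne_of_val_ne (by rw [hv3, Fin.val_zero]; omega)
      have hne1 : (3 : Fin n) ≠ 1 := Fin.ne_of_val_ne (by rw [hv3, hv1]; omega)
      have hne2 : (3 : Fin n) ≠ 2 := Fin.ne_of_val_ne (by rw [hv3, hv2]; omega)
      have h02 : (0 : Fin n) ≠ 2 := Fin.ne_of_val_ne (by rw [hv2, Fin.val_zero]; omega)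
      have h01 : (0 : Fin n) ≠ 1 := Fin.ne_of_val_ne (by rw [hv1, Fin.val_zero]; omega)
      rintro ⟨a, b⟩
      refine ⟨Pi.single (0 : Fin n) a + Pi.single (3 : Fin n) (a + b), ?_⟩
      have e0 : covMap n (Pi.single (0 : Fin n) a) = (a, a) := by
        show (_, _) = (a, a)
        rw [Prod.mk.injEq]
        constructor
        · rw [Pi.single_eq_same, Pi.single_eq_of_ne (Ne.symm h02), add_zero]
        · rw [Pi.single_eq_of_ne (Ne.symm h01), Finset.sum_pi_single',
            if_pos (Finset.mem_univ _), zero_add]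
      have e3 : covMap n (Pi.single (3 : Fin n) (a + b)) = (0, a + b) := by
        show (_, _) = (0, a + b)
        rw [Prod.mk.injEq]
        constructor
        · rw [Pi.single_eq_of_ne hne0.symm, Pi.single_eq_of_ne hne2.symm, add_zero]
        · rw [Pi.single_eq_of_ne hne1.symm, Finset.sum_pi_single',
            if_pos (Finset.mem_univ _), zero_add]
      rw [map_add, e0, e3, Prod.mk_add_mk, add_zero]
      have habb : a + (a + b) = b := by
        rw [← add_assoc, zmod2_add_self, zero_add]
      rw [habb]
    have hrank := LinearMap.finrank_range_add_finrank_ker (covMap n)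
    rw [LinearMap.range_eq_top.mpr hsurj, finrank_top] at hrank
    have hpi : Module.finrank (ZMod 2) (Fin n → ZMod 2) = n := by
      rw [Module.finrank_pi, Fintype.card_fin]
    have hprod : Module.finrank (ZMod 2) (ZMod 2 × ZMod 2) = 2 := by simp
    rw [hpi, hprod] at hrank
    omega
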